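/- arXiv:1303.5918 — 2 statements merged into one kernel-verified Lean document; each statement's English description precedes it below -/
import Mathlib

section
/- Let G be a group and u : G → ℝ a homomorphism into the additive group of the real numbers. Let I be a finite index set and suppose given, for each i ∈ I, an element λ_i of the group ring ℤ[G], an element g_i ∈ ker(u), and signs ε_i, δ_i ∈ {1, −1}. Then the element Σ_{i∈I} λ_i · (ε_i·1 + δ_i·[g_i]) of ℤ[G] is not equal to 1. -/
/-- The algebraic core of Lemma 3.3: if `u : G → ℝ` is a group homomorphism
(into the additive reals), then no finite sum `Σ λᵢ · (εᵢ·1 + δᵢ·[gᵢ])` with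
`gᵢ ∈ ker u` and signs `εᵢ, δᵢ ∈ {1, -1}` can equal `1` in the group ring `ℤ[G]`. -/
theorem sum_signed_ker_combinations_ne_one
    {G : Type*} [Group G] (u : G → ℝ) (hu : ∀ a b : G, u (a * b) = u a + u b)
    {I : Type*} [Fintype I]
    (lam : I → MonoidAlgebra ℤ G) (g : I → G) (hg : ∀ i, u (g i) = 0)
    (ε δ : I → ℤ) (hε : ∀ i, ε i = 1 ∨ ε i = -1) (hδ : ∀ i, δ i = 1 ∨ δ i = -1) :
    ∑ i : I, lam i * ((ε i : MonoidAlgebra ℤ G)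
      + (δ i : MonoidAlgebra ℤ G) * MonoidAlgebra.of ℤ G (g i)) ≠ 1 := by
  intro h
  -- augmentation mod 2
  set f : MonoidAlgebra ℤ G →ₐ[ℤ] ZMod 2 := MonoidAlgebra.lift ℤ (ZMod 2) G 1 with hf
  have key : f (∑ i : I, lam i * ((ε i : MonoidAlgebra ℤ G)
      + (δ i : MonoidAlgebra ℤ G) * MonoidAlgebra.of ℤ G (g i))) = 0 := by
    rw [map_sum]
    refine Finset.sum_eq_zero fun i _ => ?_
    have h1 : ((ε i : ℤ) : ZMod 2) = 1 := by rcases hε i with h | h <;> rw [h] <;> decide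
    have h2 : ((δ i : ℤ) : ZMod 2) = 1 := by rcases hδ i with h | h <;> rw [h] <;> decide
    rw [map_mul, map_add, map_mul, hf]
    simp [MonoidAlgebra.lift_of, map_intCast, h1, h2]
    right; decide
  rw [h, map_one] at key
  exact one_ne_zero key
end

section
/- For every group G, the left ideal of the group ring ℤ[G] generated by the set {1 + [g] : g ∈ G} ∪ {1 − [g] : g ∈ G} is a proper left ideal; that is, it does not contain the element 1. -/
/-- The left ideal of the group ring `ℤ[G]` generated by all elements
`1 + [g]` and `1 - [g]` (for `g ∈ G`) is proper: it does not contain `1`. -/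
theorem one_not_mem_span_one_add_sub_of
    (G : Type*) [Group G] :
    (1 : MonoidAlgebra ℤ G) ∉
      Ideal.span {x : MonoidAlgebra ℤ G |
        ∃ g : G, x = 1 + MonoidAlgebra.of ℤ G g ∨ x = 1 - MonoidAlgebra.of ℤ G g} := by
  -- augmentation mod 2: send every [g] to 1 ∈ ZMod 2
  let φ : MonoidAlgebra ℤ G →ₐ[ℤ] ZMod 2 := MonoidAlgebra.lift ℤ (ZMod 2) G 1
  intro hmem
  have hle : Ideal.span {x : MonoidAlgebra ℤ G |
      ∃ g : G, x = 1 + MonoidAlgebra.of ℤ G g ∨ x = 1 - MonoidAlgebra.of ℤ G g}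
      ≤ RingHom.ker φ.toRingHom := by
    rw [Ideal.span_le]
    rintro x ⟨g, h | h⟩ <;> subst h <;>
      simp [RingHom.ker, φ] <;> decide
  have := hle hmem
  rw [RingHom.mem_ker] at this
  simp at this
end
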